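/- Let A, B, C, D be real numbers with AD − BC ≠ 0, and let H be the Goursat Hermitian matrix built from A, B, C, D (a real symmetric 4×4 matrix). Then H is definite (i.e. H or −H is positive definite) if and only if all of the following hold: 0 < A < 1, 0 < D < 1, 0 < BC < AD, and 0 < BC < (1−A)(1−D). -/

import Mathlib

open Matrix

/-- The Goursat Hermitian matrix built from real parameters `A, B, C, D`, with
`E = (A+D−1)/(AD−BC)`. -/
noncomputable def goursatH (A B C D : ℝ) : Matrix (Fin 4) (Fin 4) ℝ :=
  (A * D - B * C) •
    !![C * (1 - D * ((A + D - 1) / (A * D - B * C))),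
         B * C * ((A + D - 1) / (A * D - B * C)), C * (1 - D), B * C;
       B * C * ((A + D - 1) / (A * D - B * C)),
         B * (1 - A * ((A + D - 1) / (A * D - B * C))), B * C, B * (1 - A);
       C * (1 - D), B * C, C * (1 - D), B * C;
       B * C, B * (1 - A), B * C, B * (1 - A)]

theorem goursat_quad_pos (K Δ a d1 b c1 d2 u0 u1 u2 u3 : ℝ)
    (hK : 0 < K) (hΔ : 0 < Δ) (ha : 0 < a) (hc1 : 0 < c1) (hb : 0 < b)
    (hdet1 : a * d1 - b ^ 2 = b * Δ) (hdet2 : c1 * d2 - b ^ 2 = b * K)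
    (hx : ¬(u0 = 0 ∧ u1 = 0 ∧ u2 = 0 ∧ u3 = 0)) :
    0 < K * (a * u0 ^ 2 + d1 * u1 ^ 2 - 2 * b * u0 * u1) +
        Δ * (c1 * (u0 + u2) ^ 2 + d2 * (u1 + u3) ^ 2 + 2 * b * (u0 + u2) * (u1 + u3)) := by
  set Q := K * (a * u0 ^ 2 + d1 * u1 ^ 2 - 2 * b * u0 * u1) +
      Δ * (c1 * (u0 + u2) ^ 2 + d2 * (u1 + u3) ^ 2 + 2 * b * (u0 + u2) * (u1 + u3)) with hQ
  have key : a * c1 * Q =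
      K * c1 * (a * u0 - b * u1) ^ 2 + (K * c1 * b * Δ) * u1 ^ 2 +
      Δ * a * (c1 * (u0 + u2) + b * (u1 + u3)) ^ 2 + (Δ * a * b * K) * (u1 + u3) ^ 2 := by
    rw [hQ]; linear_combination (K * c1 * u1 ^ 2) * hdet1 + (Δ * a * (u1 + u3) ^ 2) * hdet2
  by_contra hcon
  push_neg at hcon
  have t1 : 0 ≤ K * c1 * (a * u0 - b * u1) ^ 2 :=
    mul_nonneg (mul_pos hK hc1).le (sq_nonneg _)
  have t2 : 0 ≤ (K * c1 * b * Δ) * u1 ^ 2 := mul_nonneg (by positivity) (sq_nonneg _)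
  have t3 : 0 ≤ Δ * a * (c1 * (u0 + u2) + b * (u1 + u3)) ^ 2 :=
    mul_nonneg (mul_pos hΔ ha).le (sq_nonneg _)
  have t4 : 0 ≤ (Δ * a * b * K) * (u1 + u3) ^ 2 := mul_nonneg (by positivity) (sq_nonneg _)
  have hacQ : a * c1 * Q ≤ 0 := mul_nonpos_of_nonneg_of_nonpos (by positivity) hcon
  have hkc : (K * c1) ≠ 0 := (mul_pos hK hc1).ne'
  have hda : (Δ * a) ≠ 0 := (mul_pos hΔ ha).ne'
  have hco : (K * c1 * b * Δ) ≠ 0 := by positivity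
  have hco2 : (Δ * a * b * K) ≠ 0 := by positivity
  have sqz : ∀ (c v : ℝ), c * v ^ 2 = 0 → c ≠ 0 → v = 0 := by
    intro c v hcv hc
    rcases mul_eq_zero.mp hcv with h | h
    · exact absurd h hc
    · exact (pow_eq_zero_iff two_ne_zero).mp h
  have e2 : (K * c1 * b * Δ) * u1 ^ 2 = 0 := le_antisymm (by linarith) t2
  have e4 : (Δ * a * b * K) * (u1 + u3) ^ 2 = 0 := le_antisymm (by linarith) t4
  have e1 : (K * c1) * (a * u0 - b * u1) ^ 2 = 0 := by
    have h0 : K * c1 * (a * u0 - b * u1) ^ 2 = 0 := le_antisymm (by linarith) t1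
    linarith
  have e3 : (Δ * a) * (c1 * (u0 + u2) + b * (u1 + u3)) ^ 2 = 0 := by
    have h0 : Δ * a * (c1 * (u0 + u2) + b * (u1 + u3)) ^ 2 = 0 := le_antisymm (by linarith) t3
    linarith
  have hu1 : u1 = 0 := sqz _ _ e2 hco
  have hs : u1 + u3 = 0 := sqz _ _ e4 hco2
  have hu3 : u3 = 0 := by linarith
  have hu0 : u0 = 0 := by
    have h1' : a * u0 - b * u1 = 0 := sqz _ _ e1 hkc
    have h0 : a * u0 = 0 := by rw [hu1] at h1'; linarith
    rcases mul_eq_zero.mp h0 with hh | hh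
    · exact absurd hh ha.ne'
    · exact hh
  have hu2 : u2 = 0 := by
    have h3' : c1 * (u0 + u2) + b * (u1 + u3) = 0 := sqz _ _ e3 hda
    rw [hs, hu0] at h3'
    have h0 : c1 * u2 = 0 := by linarith
    rcases mul_eq_zero.mp h0 with hh | hh
    · exact absurd hh hc1.ne'
    · exact hh
  exact hx ⟨hu0, hu1, hu2, hu3⟩

theorem goursat_key (A B C D : ℝ) (h : A * D - B * C ≠ 0) (x : Fin 4 → ℝ) :
    dotProduct (star x) ((goursatH A B C D) *ᵥ x) =
      ((1 - A) * (1 - D) - B * C) *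
        (C * D * (x 0)^2 + A * B * (x 1)^2 - 2 * (B * C) * (x 0) * (x 1)) +
      (A * D - B * C) *
        (C * (1 - D) * (x 0 + x 2)^2 + B * (1 - A) * (x 1 + x 3)^2
          + 2 * (B * C) * (x 0 + x 2) * (x 1 + x 3)) := by
  simp only [goursatH, star_trivial, dotProduct, mulVec, Fin.sum_univ_four,
    Matrix.smul_apply, Matrix.of_apply, Matrix.cons_val', Matrix.cons_val_zero, Matrix.cons_val_one, Matrix.head_cons,
    Matrix.empty_val', Matrix.cons_val_fin_one, Matrix.head_fin_const, smul_eq_mul,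
    Matrix.cons_val_two, Matrix.cons_val_three, Matrix.tail_cons]
  field_simp
  ring

theorem goursat_core (A B C D : ℝ)
    (P1 : 0 < ((1-A)*(1-D)-B*C) * (C*D))
    (P2 : 0 < ((1-A)*(1-D)-B*C) * (A*B))
    (P3 : 0 < (A*D-B*C) * (C*(1-D)))
    (P4 : 0 < (A*D-B*C) * (B*(1-A)))
    (P5 : 0 < ((1-A)*(1-D)-B*C) * (A*B) * (B*C) * (A*D-B*C))
    (P6 : 0 < (A*D-B*C) * (B^2*C*(1-A)) * ((1-A)*(1-D)-B*C)) :
    0 < A ∧ A < 1 ∧ 0 < D ∧ D < 1 ∧ 0 < B*C ∧ B*C < A*D ∧ 0 < B*C ∧ B*C < (1-A)*(1-D) := by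
  have hBCΔ : 0 < B*C*(A*D-B*C) := by nlinarith [P2, P5]
  have hBCK : 0 < B*C*((1-A)*(1-D)-B*C) := by nlinarith [P4, P6]
  have hKΔ : 0 < ((1-A)*(1-D)-B*C)*(A*D-B*C) := by
    nlinarith [mul_pos hBCΔ hBCK, sq_nonneg (B*C)]
  have hC : C ≠ 0 := by intro h0; rw [h0] at P1; norm_num at P1
  have hB : B ≠ 0 := by intro h0; rw [h0] at P2; norm_num at P2
  have hC2 : 0 < C^2 := pow_two_pos_of_ne_zero hC
  have hB2 : 0 < B^2 := pow_two_pos_of_ne_zero hB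
  have hDD : 0 < D*(1-D) := by nlinarith [mul_pos P1 P3, mul_pos hC2 hKΔ]
  have hAA : 0 < A*(1-A) := by nlinarith [mul_pos P2 P4, mul_pos hB2 hKΔ]
  have hD0 : 0 < D := by nlinarith [hDD]
  have hD1 : D < 1 := by nlinarith [hDD]
  have hA0 : 0 < A := by nlinarith [hAA]
  have hA1 : A < 1 := by nlinarith [hAA]
  have hBC : 0 < B*C := by nlinarith [hBCΔ, mul_pos hA0 hD0, sq_nonneg (B*C)]
  have hΔ : 0 < A*D - B*C := by nlinarith [hBCΔ, hBC]
  have hK : 0 < (1-A)*(1-D) - B*C := by nlinarith [hBCK, hBC]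
  exact ⟨hA0, hA1, hD0, hD1, hBC, by linarith, hBC, by linarith⟩

theorem goursat_herm (A B C D : ℝ) : (goursatH A B C D).IsHermitian := by
  have : (goursatH A B C D)ᴴ = goursatH A B C D := by
    ext i j
    fin_cases i <;> fin_cases j <;> simp [goursatH, Matrix.conjTranspose_apply]
  exact this

/-- Definiteness criterion for the Goursat Hermitian matrix: `H` or `−H` is
positive definite iff `0 < A < 1`, `0 < D < 1`, `0 < BC < AD` and
`0 < BC < (1−A)(1−D)`. -/
theorem stmt_12 (A B C D : ℝ) (h : A * D - B * C ≠ 0) :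
    ((goursatH A B C D).PosDef ∨ (-(goursatH A B C D)).PosDef) ↔
      (0 < A ∧ A < 1 ∧ 0 < D ∧ D < 1 ∧
        0 < B * C ∧ B * C < A * D ∧
        0 < B * C ∧ B * C < (1 - A) * (1 - D)) := by
  constructor
  · rintro (hp | hp)
    · have val : ∀ x : Fin 4 → ℝ, x ≠ 0 →
          0 < ((1 - A) * (1 - D) - B * C) *
            (C * D * (x 0)^2 + A * B * (x 1)^2 - 2 * (B * C) * (x 0) * (x 1)) +
          (A * D - B * C) *
            (C * (1 - D) * (x 0 + x 2)^2 + B * (1 - A) * (x 1 + x 3)^2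
              + 2 * (B * C) * (x 0 + x 2) * (x 1 + x 3)) := by
        intro x hx
        have h2 := hp.dotProduct_mulVec_pos hx
        rwa [goursat_key A B C D h] at h2
      have hv1 := val ![1, 0, -1, 0] (by intro hc; simpa using congrFun hc 0)
      have hv2 := val ![0, 1, 0, -1] (by intro hc; simpa using congrFun hc 1)
      have hv3 := val ![0, 0, 1, 0] (by intro hc; simpa using congrFun hc 2)
      have hv4 := val ![0, 0, 0, 1] (by intro hc; simpa using congrFun hc 3)
      simp only [Matrix.cons_val_zero, Matrix.cons_val_one, Matrix.head_cons,
        Matrix.cons_val_two, Matrix.tail_cons, Matrix.cons_val_three] at hv1 hv2 hv3 hv4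
      have P1 : 0 < ((1-A)*(1-D)-B*C) * (C*D) := by linarith [hv1]
      have P2 : 0 < ((1-A)*(1-D)-B*C) * (A*B) := by linarith [hv2]
      have P3 : 0 < (A*D-B*C) * (C*(1-D)) := by linarith [hv3]
      have P4 : 0 < (A*D-B*C) * (B*(1-A)) := by linarith [hv4]
      have hAB : A * B ≠ 0 := by
        intro h0; rw [h0, mul_zero] at P2; exact lt_irrefl _ P2
      have hB1A : B * (1 - A) ≠ 0 := by
        intro h0; rw [h0, mul_zero] at P4; exact lt_irrefl _ P4
      have hv5 := val ![A*B, B*C, -(A*B), -(B*C)]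
        (by intro hc; exact hAB (by simpa using congrFun hc 0))
      have hv6 := val ![0, 0, B*(1-A), -(B*C)]
        (by intro hc; exact hB1A (by simpa using congrFun hc 2))
      simp only [Matrix.cons_val_zero, Matrix.cons_val_one, Matrix.head_cons,
        Matrix.cons_val_two, Matrix.tail_cons, Matrix.cons_val_three] at hv5 hv6
      have P5 : 0 < ((1-A)*(1-D)-B*C) * (A*B) * (B*C) * (A*D-B*C) := by linarith [hv5]
      have P6 : 0 < (A*D-B*C) * (B^2*C*(1-A)) * ((1-A)*(1-D)-B*C) := by linarith [hv6]
      exact goursat_core A B C D P1 P2 P3 P4 P5 P6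
    · have val : ∀ x : Fin 4 → ℝ, x ≠ 0 →
          0 < -(((1 - A) * (1 - D) - B * C) *
            (C * D * (x 0)^2 + A * B * (x 1)^2 - 2 * (B * C) * (x 0) * (x 1)) +
          (A * D - B * C) *
            (C * (1 - D) * (x 0 + x 2)^2 + B * (1 - A) * (x 1 + x 3)^2
              + 2 * (B * C) * (x 0 + x 2) * (x 1 + x 3))) := by
        intro x hx
        have h2 := hp.dotProduct_mulVec_pos hx
        rw [Matrix.neg_mulVec, dotProduct_neg, goursat_key A B C D h] at h2
        exact h2
      have hv1 := val ![1, 0, -1, 0] (by intro hc; simpa using congrFun hc 0)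
      have hv2 := val ![0, 1, 0, -1] (by intro hc; simpa using congrFun hc 1)
      have hv3 := val ![0, 0, 1, 0] (by intro hc; simpa using congrFun hc 2)
      have hv4 := val ![0, 0, 0, 1] (by intro hc; simpa using congrFun hc 3)
      simp only [Matrix.cons_val_zero, Matrix.cons_val_one, Matrix.head_cons,
        Matrix.cons_val_two, Matrix.tail_cons, Matrix.cons_val_three] at hv1 hv2 hv3 hv4
      have P1 : 0 < ((1-A)*(1-D)-(-B)*(-C)) * ((-C)*D) := by linarith [hv1]
      have P2 : 0 < ((1-A)*(1-D)-(-B)*(-C)) * (A*(-B)) := by linarith [hv2]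
      have P3 : 0 < (A*D-(-B)*(-C)) * ((-C)*(1-D)) := by linarith [hv3]
      have P4 : 0 < (A*D-(-B)*(-C)) * ((-B)*(1-A)) := by linarith [hv4]
      have hAB : A * B ≠ 0 := by
        intro h0
        have h1 : A * -B = 0 := by linear_combination -h0
        rw [h1, mul_zero] at P2; exact lt_irrefl _ P2
      have hB1A : B * (1 - A) ≠ 0 := by
        intro h0
        have h1 : -B * (1 - A) = 0 := by linear_combination -h0
        rw [h1, mul_zero] at P4; exact lt_irrefl _ P4
      have hv5 := val ![A*B, B*C, -(A*B), -(B*C)]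
        (by intro hc; exact hAB (by simpa using congrFun hc 0))
      have hv6 := val ![0, 0, B*(1-A), -(B*C)]
        (by intro hc; exact hB1A (by simpa using congrFun hc 2))
      simp only [Matrix.cons_val_zero, Matrix.cons_val_one, Matrix.head_cons,
        Matrix.cons_val_two, Matrix.tail_cons, Matrix.cons_val_three] at hv5 hv6
      have P5 : 0 < ((1-A)*(1-D)-(-B)*(-C)) * (A*(-B)) * ((-B)*(-C)) * (A*D-(-B)*(-C)) := by
        linarith [hv5]
      have P6 : 0 < (A*D-(-B)*(-C)) * ((-B)^2*(-C)*(1-A)) * ((1-A)*(1-D)-(-B)*(-C)) := by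
        linarith [hv6]
      obtain ⟨q1, q2, q3, q4, q5, q6, q7, q8⟩ := goursat_core A (-B) (-C) D P1 P2 P3 P4 P5 P6
      exact ⟨q1, q2, q3, q4, by linarith, by linarith, by linarith, by linarith⟩
  · rintro ⟨hA0, hA1, hD0, hD1, hBC, hΔ', _, hK'⟩
    have hK : 0 < (1-A)*(1-D) - B*C := by linarith
    have hΔ : 0 < A*D - B*C := by linarith
    have hB : B ≠ 0 := by intro h0; rw [h0] at hBC; norm_num at hBC
    rcases hB.lt_or_gt with hBneg | hBpos
    · -- B < 0, so C < 0 and -H is positive definite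
      have hC : C < 0 := by nlinarith [hBC]
      right
      refine Matrix.posDef_iff_dotProduct_mulVec.mpr ⟨(goursat_herm A B C D).neg, fun x hx => ?_⟩
      rw [Matrix.neg_mulVec, dotProduct_neg, goursat_key A B C D h]
      have hnz : ¬(x 0 = 0 ∧ -(x 1) = 0 ∧ x 2 = 0 ∧ -(x 3) = 0) := by
        rintro ⟨h0, h1, h2, h3⟩
        apply hx
        funext i
        fin_cases i
        · exact h0
        · simpa using (neg_eq_zero.mp h1)
        · exact h2
        · simpa using (neg_eq_zero.mp h3)
      have hq := goursat_quad_pos ((1-A)*(1-D) - B*C) (A*D - B*C)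
        (-(C*D)) (-(A*B)) (B*C) (-(C*(1-D))) (-(B*(1-A)))
        (x 0) (-(x 1)) (x 2) (-(x 3))
        hK hΔ (by nlinarith) (by nlinarith) hBC (by ring) (by ring) hnz
      linarith [hq]
    · -- B > 0, so C > 0 and H is positive definite
      have hC : 0 < C := by nlinarith [hBC]
      left
      refine Matrix.posDef_iff_dotProduct_mulVec.mpr ⟨goursat_herm A B C D, fun x hx => ?_⟩
      rw [goursat_key A B C D h]
      have hnz : ¬(x 0 = 0 ∧ x 1 = 0 ∧ x 2 = 0 ∧ x 3 = 0) := by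
        rintro ⟨h0, h1, h2, h3⟩
        apply hx
        funext i
        fin_cases i <;> assumption
      have hq := goursat_quad_pos ((1-A)*(1-D) - B*C) (A*D - B*C)
        (C*D) (A*B) (B*C) (C*(1-D)) (B*(1-A))
        (x 0) (x 1) (x 2) (x 3)
        hK hΔ (by positivity) (by nlinarith) hBC (by ring) (by ring) hnz
      linarith [hq]
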